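/- Let R be a ring and X a compact right R-module (a compact Hausdorff abelian topological group with a right R-action by continuous endomorphisms). Suppose that every finite cover of X by finite-index closed submodules contains X itself. Then X is almost monothetic: every finite cover of X by closed submodules contains X itself. -/

import Mathlib

open Pointwise

/-- A compact right `R`-module `X` is almost monothetic if every finite cover of `X` by
closed submodules contains `X` (i.e. `⊤`) itself. Right modules are `Rᵐᵒᵖ`-modules. -/
def AlmostMonothetic (R X : Type*) [Ring R] [AddCommGroup X] [Module Rᵐᵒᵖ X]
    [TopologicalSpace X] : Prop :=
  ∀ M : Finset (Submodule Rᵐᵒᵖ X), (∀ N ∈ M, IsClosed (N : Set X)) →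
    (∀ x : X, ∃ N ∈ M, x ∈ N) → ⊤ ∈ M

/-- If every finite cover of a compact right `R`-module `X` by finite-index closed
submodules contains `X` itself, then `X` is almost monothetic. -/
theorem almostMonothetic_of_finite_index_covers (R X : Type*) [Ring R] [AddCommGroup X]
    [Module Rᵐᵒᵖ X] [TopologicalSpace X] [CompactSpace X] [T2Space X]
    [IsTopologicalAddGroup X]
    (hcont : ∀ r : Rᵐᵒᵖ, Continuous fun x : X => r • x)
    (h : ∀ M : Finset (Submodule Rᵐᵒᵖ X), (∀ N ∈ M, IsClosed (N : Set X)) →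
      (∀ N ∈ M, Finite (X ⧸ N)) → (∀ x : X, ∃ N ∈ M, x ∈ N) → ⊤ ∈ M) :
    AlmostMonothetic R X := by
  classical
  intro M hclosed hcov
  -- the submodules in `M` cover `X`
  have hcovers0 : ⋃ N ∈ M, ((N : Submodule Rᵐᵒᵖ X) : Set X) = Set.univ := by
    rw [Set.eq_univ_iff_forall]
    intro x
    obtain ⟨N, hNM, hxN⟩ := hcov x
    exact Set.mem_biUnion hNM hxN
  -- drop the infinite-index members from the cover (B. H. Neumann's lemma)
  have hfilter := AddSubgroup.leftCoset_cover_filter_FiniteIndex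
    (H := fun N : Submodule Rᵐᵒᵖ X => N.toAddSubgroup)
    (g := fun _ : Submodule Rᵐᵒᵖ X => (0 : X)) (s := M)
    (by simpa only [zero_vadd, Submodule.coe_toAddSubgroup] using hcovers0)
  simp only [zero_vadd, Submodule.coe_toAddSubgroup] at hfilter
  set M' : Finset (Submodule Rᵐᵒᵖ X) :=
    M.filter (fun N => N.toAddSubgroup.FiniteIndex) with hM'
  have hsub : M' ⊆ M := Finset.filter_subset _ _
  have htop : ⊤ ∈ M' := by
    apply h M' (fun N hN => hclosed N (hsub hN))
    · intro N hN
      have hfi : N.toAddSubgroup.FiniteIndex := (Finset.mem_filter.mp hN).2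
      exact AddSubgroup.finite_quotient_of_finiteIndex (H := N.toAddSubgroup)
    · intro x
      have hx : x ∈ ⋃ N ∈ M', ((N : Submodule Rᵐᵒᵖ X) : Set X) := by
        rw [hfilter]; trivial
      obtain ⟨N, hN, hxN⟩ := Set.mem_iUnion₂.mp hx
      exact ⟨N, hN, hxN⟩
  exact hsub htop
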